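/- Let $\mathfrak{G}$ be an upwards $k$-linear category with objects indexed by $\mathbb{N}$ and finite-dimensional Hom spaces. Then a $\mathfrak{G}$-module $M$ has finite length if and only if $M_n = M([n])$ is finite-dimensional for all $n$ and $M_n = 0$ for all but finitely many $n$. Moreover, each principal injective $\mathbf{I}_n$ (given by $\mathbf{I}_n(y) = \operatorname{Hom}(y, [n])^*$) has finite length, and every finite-length $\mathfrak{G}$-module embeds into a finite direct sum of principal injectives. -/

import Mathlib

open CategoryTheory CategoryTheory.Limits
open Module

set_option linter.unusedSectionVars false
set_option linter.unusedVariables false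

universe v u w

/-- The principal injective module `𝐈_x` over a `k`-linear category `G`, given by
`𝐈_x(y) = Hom_G(y, x)^*`. -/
noncomputable def prinInj (k : Type w) [Field k] {G : Type u} [Category.{v} G]
    [Preadditive G] [CategoryTheory.Linear k G] (x : G) : G ⥤ ModuleCat.{max v w} k where
  obj y := ModuleCat.of k (Module.Dual k (y ⟶ x))
  map {y z} f := ModuleCat.ofHom (LinearMap.dualMap (CategoryTheory.Linear.leftComp k x f))
  map_id := by
    intro y; ext φ : 2
    refine LinearMap.ext fun g => ?_
    simp [LinearMap.dualMap_apply, CategoryTheory.Linear.leftComp]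
  map_comp := by
    intro y z w f g; ext φ : 2
    refine LinearMap.ext fun h => ?_
    simp [LinearMap.dualMap_apply, CategoryTheory.Linear.leftComp]

/-- An object has finite length if the lengths of strictly increasing chains of
subobjects are bounded. -/
def FinLenObj {D : Type u} [Category.{v} D] (X : D) : Prop :=
  ∃ n : ℕ, ∀ s : Fin n → Subobject X, ¬ StrictMono s

section Aux
variable {k : Type w} [Field k] {C : Type u} [Category.{v} C] [Preadditive C]
  [CategoryTheory.Linear k C]

/-- A pointwise submodule of a module `M`, closed under the action. -/
structure SubFun (M : C ⥤ ModuleCat.{max v w} k) where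
  S : ∀ y : C, Submodule k (M.obj y)
  compat : ∀ {y z : C} (f : y ⟶ z), ∀ v ∈ S y, M.map f v ∈ S z

variable {M : C ⥤ ModuleCat.{max v w} k}

noncomputable def SubFun.toFunctor (T : SubFun M) : C ⥤ ModuleCat.{max v w} k where
  obj y := ModuleCat.of k (T.S y)
  map f := ModuleCat.ofHom ((M.map f).hom.restrict (fun x hx => T.compat f x hx))
  map_id := by
    intro y
    refine ModuleCat.hom_ext (LinearMap.ext fun x => Subtype.ext ?_)
    simp [ModuleCat.ofHom, LinearMap.restrict_apply]
  map_comp := by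
    intro x y z f g
    refine ModuleCat.hom_ext (LinearMap.ext fun v => Subtype.ext ?_)
    simp [ModuleCat.ofHom, LinearMap.restrict_apply]

noncomputable def SubFun.ι (T : SubFun M) : T.toFunctor ⟶ M where
  app y := ModuleCat.ofHom (T.S y).subtype
  naturality := by
    intro y z f
    refine ModuleCat.hom_ext (LinearMap.ext fun v => ?_)
    rfl

instance (T : SubFun M) (y : C) : Mono (T.ι.app y) :=
  (ModuleCat.mono_iff_injective _).mpr (fun a b h => Subtype.ext h)

instance (T : SubFun M) : Mono T.ι := NatTrans.mono_of_mono_app _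

noncomputable def SubFun.toSub (T : SubFun M) : Subobject M := Subobject.mk T.ι

lemma SubFun.toSub_le_toSub {T T' : SubFun M} (h : ∀ y, T.S y ≤ T'.S y) :
    T.toSub ≤ T'.toSub := by
  refine Subobject.mk_le_mk_of_comm
    { app := fun y => ModuleCat.ofHom (Submodule.inclusion (h y)),
      naturality := ?_ } ?_
  · intro y z f
    refine ModuleCat.hom_ext (LinearMap.ext fun v => Subtype.ext ?_)
    rfl
  · refine NatTrans.ext (funext fun y => ?_)
    refine ModuleCat.hom_ext (LinearMap.ext fun v => ?_)
    rfl

lemma SubFun.le_pointwise {T T' : SubFun M} (h : T.toSub ≤ T'.toSub) (y : C) :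
    T.S y ≤ T'.S y := by
  intro v hv
  have h2 := Subobject.ofMkLEMk_comp h
  have h3 := congrArg (fun (α : T.toFunctor ⟶ M) => α.app y (⟨v, hv⟩ : T.S y)) h2
  simp only [NatTrans.comp_app] at h3
  have : (T.ι.app y) (⟨v, hv⟩ : T.S y) = v := rfl
  rw [this] at h3
  rw [← h3]
  exact ((Subobject.ofMkLEMk T.ι T'.ι h).app y ⟨v, hv⟩).2

lemma SubFun.lt_toSub {T T' : SubFun M} (h : ∀ y, T.S y ≤ T'.S y)
    (hstrict : ∃ y, ¬ T'.S y ≤ T.S y) : T.toSub < T'.toSub := by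
  refine lt_of_le_not_ge (SubFun.toSub_le_toSub h) fun hle => ?_
  obtain ⟨y, hy⟩ := hstrict
  exact hy (SubFun.le_pointwise hle y)

/-! ### the degree filtration -/

noncomputable def degS (obj : ℕ → C) (M : C ⥤ ModuleCat.{max v w} k) (m : ℕ) (y : C) :
    Submodule k (M.obj y) :=
  ⨆ (j : ℕ) (_ : m ≤ j) (f : obj j ⟶ y), LinearMap.range (M.map f).hom

lemma degS_compat (obj : ℕ → C) (m : ℕ) {y z : C} (g : y ⟶ z) :
    ∀ v ∈ degS obj M m y, M.map g v ∈ degS obj M m z := by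
  intro v hv
  have h1 : Submodule.map (M.map g).hom (degS obj M m y) ≤ degS obj M m z := by
    unfold degS
    simp only [Submodule.map_iSup]
    refine iSup_mono fun j => iSup_mono fun hj => iSup_le fun f => ?_
    refine le_iSup_of_le (f ≫ g) ?_
    rw [← LinearMap.range_comp]
    have : (M.map (f ≫ g)).hom = (M.map g).hom.comp (M.map f).hom := by
      rw [M.map_comp]; rfl
    rw [this]
  exact h1 (Submodule.mem_map_of_mem hv)

noncomputable def degFil (obj : ℕ → C) (M : C ⥤ ModuleCat.{max v w} k) (m : ℕ) : SubFun M :=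
  ⟨degS obj M m, fun f v hv => degS_compat obj m f v hv⟩

lemma degS_antitone (obj : ℕ → C) {m m' : ℕ} (h : m' ≤ m) (y : C) :
    degS (M := M) obj m y ≤ degS (M := M) obj m' y := by
  refine iSup_mono fun j => ?_
  exact iSup_le fun hj => le_iSup_of_le (h.trans hj) le_rfl

lemma degS_eq_top (obj : ℕ → C) {m j : ℕ} (h : m ≤ j) :
    degS (M := M) obj m (obj j) = ⊤ := by
  rw [eq_top_iff]
  refine le_trans ?_ (le_iSup_of_le j (le_iSup_of_le h (le_iSup_of_le (𝟙 (obj j)) le_rfl)))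
  rw [M.map_id]
  rintro v -
  exact ⟨v, rfl⟩

lemma degS_eq_bot [M.Additive] (obj : ℕ → C)
    (hup : ∀ (n m : ℕ) (f : obj n ⟶ obj m), f ≠ 0 → n ≤ m) {m j : ℕ} (h : j < m) :
    degS (M := M) obj m (obj j) = ⊥ := by
  rw [eq_bot_iff]
  refine iSup_le fun t => iSup_le fun ht => iSup_le fun f => ?_
  have hf : f = 0 := by
    by_contra hne
    exact absurd (hup t j f hne) (by omega)
  rw [hf, M.map_zero, ModuleCat.hom_zero, LinearMap.range_zero]

/-! ### the generated subfunctor -/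

noncomputable def genS (x : C) (V : Submodule k (M.obj x)) (y : C) : Submodule k (M.obj y) :=
  ⨆ (f : x ⟶ y), V.map (M.map f).hom

lemma genS_compat (x : C) (V : Submodule k (M.obj x)) {y z : C} (g : y ⟶ z) :
    ∀ v ∈ genS x V y, M.map g v ∈ genS x V z := by
  intro v hv
  have h1 : Submodule.map (M.map g).hom (genS x V y) ≤ genS x V z := by
    unfold genS
    simp only [Submodule.map_iSup]
    refine iSup_le fun f => le_iSup_of_le (f ≫ g) ?_
    rw [← Submodule.map_comp]
    have : (M.map (f ≫ g)).hom = (M.map g).hom.comp (M.map f).hom := by rw [M.map_comp]; rfl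
    rw [this]
  exact h1 (Submodule.mem_map_of_mem hv)

noncomputable def genFil (x : C) (V : Submodule k (M.obj x)) : SubFun M :=
  ⟨genS x V, fun f v hv => genS_compat x V f v hv⟩

lemma genS_mono (x : C) {V W : Submodule k (M.obj x)} (h : V ≤ W) (y : C) :
    genS (M := M) x V y ≤ genS x W y :=
  iSup_mono fun _ => Submodule.map_mono h

lemma le_genS_self (x : C) (V : Submodule k (M.obj x)) : V ≤ genS (M := M) x V x := by
  refine le_trans ?_ (le_iSup_of_le (𝟙 x) le_rfl)
  rw [M.map_id]
  intro v hv
  exact ⟨v, hv, rfl⟩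

lemma genS_fd [M.Additive] [Functor.Linear k M] (x : C)
    [FiniteDimensional k (x ⟶ x)] (V : Submodule k (M.obj x)) [FiniteDimensional k V] :
    FiniteDimensional k (genS (M := M) x V x) := by
  set b := Module.finBasis k (x ⟶ x)
  have hle : genS (M := M) x V x ≤ ⨆ i, V.map (M.map (b i)).hom := by
    refine iSup_le fun f => ?_
    rintro v ⟨w, hw, rfl⟩
    have hf : f = ∑ i, b.repr f i • b i := (b.sum_repr f).symm
    have : M.map f w = ∑ i, b.repr f i • (M.map (b i) w) := by
      conv_lhs => rw [hf]
      rw [M.map_sum]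
      have : ∀ i : Fin (Module.finrank k (x ⟶ x)),
          M.map (b.repr f i • b i) = b.repr f i • M.map (b i) := fun i => M.map_smul _ _
      simp only [this]
      simp
    rw [this]
    refine Submodule.sum_mem _ fun i _ => ?_
    exact Submodule.smul_mem _ _ (le_iSup (fun i => V.map (M.map (b i)).hom) i
      (Submodule.mem_map_of_mem hw))
  haveI : ∀ i, FiniteDimensional k (V.map (M.map (b i)).hom) := fun i => Module.Finite.map V _
  exact Submodule.finiteDimensional_of_le hle

/-! ### subobject dimension lemmas -/

lemma modcat_subsingleton_of_isZero {X : ModuleCat.{max v w} k} (h : IsZero X) :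
    Subsingleton X := by
  have h0 : (𝟙 X) = (0 : X ⟶ X) := h.eq_of_src _ _
  refine ⟨fun a b => ?_⟩
  have ha : a = (0 : X ⟶ X) a := by rw [← h0]; rfl
  have hb : b = (0 : X ⟶ X) b := by rw [← h0]; rfl
  rw [ha, hb]
  exact (LinearMap.zero_apply a).trans (LinearMap.zero_apply b).symm

lemma modcat_isIso_of_bijective {X Y : ModuleCat.{max v w} k} (f : X ⟶ Y)
    (hb : Function.Bijective f) : IsIso f := by
  let e := LinearEquiv.ofBijective f.hom hb
  refine ⟨ModuleCat.ofHom e.symm.toLinearMap, ?_, ?_⟩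
  · exact ModuleCat.hom_ext (LinearMap.ext fun x => e.symm_apply_apply x)
  · exact ModuleCat.hom_ext (LinearMap.ext fun y => e.apply_symm_apply y)

lemma subobj_arrow_inj (P : Subobject M) (y : C) :
    Function.Injective ⇑(P.arrow.app y) :=
  (ModuleCat.mono_iff_injective _).mp inferInstance

lemma subobj_ofLE_inj {P Q : Subobject M} (h : P ≤ Q) (y : C) :
    Function.Injective ⇑((Subobject.ofLE P Q h).app y) :=
  (ModuleCat.mono_iff_injective _).mp inferInstance

lemma subobj_fd (P : Subobject M) (y : C) [FiniteDimensional k (M.obj y)] :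
    FiniteDimensional k ((Subobject.underlying.obj P).obj y) :=
  FiniteDimensional.of_injective (P.arrow.app y).hom (subobj_arrow_inj P y)

lemma subobj_eq_of_isoapp {P Q : Subobject M} (h : P ≤ Q)
    (hiso : ∀ y : C, IsIso ((Subobject.ofLE P Q h).app y)) : P = Q := by
  haveI := hiso
  haveI : IsIso (Subobject.ofLE P Q h) := NatIso.isIso_of_isIso_app _
  refine le_antisymm h (Subobject.le_of_comm (inv (Subobject.ofLE P Q h)) ?_)
  rw [IsIso.inv_comp_eq, Subobject.ofLE_arrow]

lemma subobj_isoapp_conj {P Q : Subobject M} (h : P ≤ Q) {y z : C} (e : y ≅ z)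
    (hiso : IsIso ((Subobject.ofLE P Q h).app z)) :
    IsIso ((Subobject.ofLE P Q h).app y) := by
  have hnat := (Subobject.ofLE P Q h).naturality e.hom
  haveI : IsIso ((Subobject.underlying.obj P).map e.hom) :=
    inferInstanceAs (IsIso ((Subobject.underlying.obj P).mapIso e).hom)
  haveI : IsIso ((Subobject.underlying.obj Q).map e.hom) :=
    inferInstanceAs (IsIso ((Subobject.underlying.obj Q).mapIso e).hom)
  haveI : IsIso ((Subobject.ofLE P Q h).app y ≫ (Subobject.underlying.obj Q).map e.hom) := by
    rw [← hnat]
    infer_instance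
  exact IsIso.of_isIso_comp_right _ ((Subobject.underlying.obj Q).map e.hom)

lemma fin_le_of_strictMono {r : ℕ} (f : Fin r → ℕ) (hf : StrictMono f) (i : Fin r) :
    (i : ℕ) ≤ f i := by
  obtain ⟨j, hj⟩ := i
  induction j with
  | zero => exact Nat.zero_le _
  | succ m ih =>
    have h1 := ih (by omega)
    have h2 : f ⟨m, by omega⟩ < f ⟨m + 1, hj⟩ := hf (by simp [Fin.lt_def])
    simp only [Fin.val_mk] at h1 ⊢
    omega

lemma finrank_le_of_le {V : Type (max v w)} [AddCommGroup V] [Module k V]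
    {p q : Submodule k V} [FiniteDimensional k q] (h : p ≤ q) :
    finrank k p ≤ finrank k q :=
  LinearMap.finrank_le_finrank_of_injective (Submodule.inclusion_injective h)

lemma exists_bigger {V : Type (max v w)} [AddCommGroup V] [Module k V]
    (hinf : ¬ FiniteDimensional k V) (W : Submodule k V) [FiniteDimensional k W] (t : ℕ) :
    ∃ W' : Submodule k V, W ≤ W' ∧ FiniteDimensional k ↥W' ∧ t < finrank k ↥W' := by
  suffices h : ∀ t : ℕ, ∃ W' : Submodule k V,
      W ≤ W' ∧ FiniteDimensional k ↥W' ∧ t ≤ finrank k ↥W' by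
    obtain ⟨W', h1, h2, h3⟩ := h (t + 1)
    exact ⟨W', h1, h2, by omega⟩
  intro t
  induction t with
  | zero => exact ⟨W, le_rfl, inferInstance, Nat.zero_le _⟩
  | succ m ih =>
    obtain ⟨W', h1, h2, h3⟩ := ih
    haveI := h2
    have hne : W' ≠ ⊤ := by
      rintro rfl
      exact hinf (Submodule.topEquiv.finiteDimensional)
    obtain ⟨v, hv⟩ : ∃ v, v ∉ W' := by
      by_contra hc
      push_neg at hc
      exact hne (Submodule.eq_top_iff'.mpr hc)
    refine ⟨W' ⊔ Submodule.span k {v}, le_trans h1 le_sup_left, inferInstance, ?_⟩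
    have hlt : W' < W' ⊔ Submodule.span k {v} := by
      refine lt_of_le_of_ne le_sup_left fun hEq => hv ?_
      rw [hEq]
      exact Submodule.mem_sup_right (Submodule.mem_span_singleton_self v)
    have := Submodule.finrank_lt_finrank_of_lt hlt
    omega

/-! ### Part 1 -/

lemma part1 (obj : ℕ → C)
    (hsurj : ∀ X : C, ∃ n : ℕ, Nonempty (X ≅ obj n))
    (hup : ∀ (n m : ℕ) (f : obj n ⟶ obj m), f ≠ 0 → n ≤ m)
    (hfd : ∀ x y : C, FiniteDimensional k (x ⟶ y))
    (M : C ⥤ ModuleCat.{max v w} k) [M.Additive] [Functor.Linear k M] :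
    FinLenObj M ↔ ((∀ n : ℕ, FiniteDimensional k (M.obj (obj n))) ∧
      {n : ℕ | ¬ IsZero (M.obj (obj n))}.Finite) := by
  constructor
  · rintro ⟨n, hn⟩
    constructor
    · -- finite dimensionality of each value
      intro n₀
      by_contra hninf
      set x := obj n₀ with hx
      haveI := hfd x x
      have key : ∀ (W : Submodule k (M.obj x)), FiniteDimensional k ↥W →
          ∃ W', W ≤ W' ∧ FiniteDimensional k ↥W' ∧
            finrank k ↥(genS (M := M) x W x) < finrank k ↥W' := by
        intro W hW
        haveI := hW
        haveI : FiniteDimensional k (genS (M := M) x W x) := genS_fd x W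
        exact exists_bigger hninf W _
      choose F h1 h2 h3 using key
      let chain : ℕ → {W : Submodule k (M.obj x) // FiniteDimensional k ↥W} :=
        fun i => Nat.rec ⟨⊥, inferInstance⟩ (fun _ p => ⟨F p.1 p.2, h2 p.1 p.2⟩) i
      have hchainle : ∀ i, (chain i).1 ≤ (chain (i + 1)).1 := fun i => h1 _ _
      have hmono : Monotone (fun i => (chain i).1) := monotone_nat_of_le_succ hchainle
      have hrk : ∀ i, finrank k ↥(genS (M := M) x (chain i).1 x) <
          finrank k ↥(chain (i + 1)).1 := fun i => h3 _ _
      refine hn (fun i => (genFil x (chain i.val).1).toSub) fun i j hij => ?_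
      refine SubFun.lt_toSub (fun y => genS_mono x (hmono (le_of_lt hij)) y) ⟨x, fun hle => ?_⟩
      haveI := (chain i.val).2
      haveI := (chain j.val).2
      haveI : FiniteDimensional k (genS (M := M) x (chain i.val).1 x) := genS_fd x _
      have l0 : (chain j.val).1 ≤ genS (M := M) x (chain i.val).1 x :=
        le_trans (le_genS_self x _) hle
      have l1 : finrank k ↥(chain j.val).1 ≤ finrank k ↥(genS (M := M) x (chain i.val).1 x) :=
        finrank_le_of_le l0
      have l2 : finrank k ↥(chain (i.val + 1)).1 ≤ finrank k ↥(chain j.val).1 :=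
        finrank_le_of_le (hmono (by exact hij))
      have l3 := hrk i.val
      omega
    · -- finiteness of the support
      by_contra hinf
      rw [← Set.not_infinite, not_not] at hinf
      haveI : Infinite ↥{n : ℕ | ¬ IsZero (M.obj (obj n))} := Set.infinite_coe_iff.mpr hinf
      set g : ℕ → ℕ := fun i =>
        ((Nat.Subtype.orderIsoOfNat {n : ℕ | ¬ IsZero (M.obj (obj n))} i : ℕ)) with hg
      have hgmono : StrictMono g := fun a b hab =>
        Subtype.coe_lt_coe.mpr ((Nat.Subtype.orderIsoOfNat _).strictMono hab)
      have hgmem : ∀ i, ¬ IsZero (M.obj (obj (g i))) := fun i =>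
        (Nat.Subtype.orderIsoOfNat {n : ℕ | ¬ IsZero (M.obj (obj n))} i).2
      refine hn (fun i => (degFil obj M (g (n - 1 - i.val))).toSub) fun i j hij => ?_
      have hval : i.val < j.val := hij
      have hj : j.val ≤ n - 1 := by omega
      have hth : g (n - 1 - j.val) < g (n - 1 - i.val) := hgmono (by omega)
      refine SubFun.lt_toSub
        (fun y => degS_antitone obj (le_of_lt hth) y) ⟨obj (g (n - 1 - j.val)), fun hle => ?_⟩
      simp only [degFil] at hle
      rw [degS_eq_top obj le_rfl, degS_eq_bot obj hup hth] at hle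
      have hnt : Nontrivial (M.obj (obj (g (n - 1 - j.val)))) := by
        by_contra hns
        rw [not_nontrivial_iff_subsingleton] at hns
        exact hgmem (n - 1 - j.val) (@ModuleCat.isZero_of_subsingleton k _ _ hns)
      have : (⊤ : Submodule k (M.obj (obj (g (n - 1 - j.val))))) = ⊥ := le_bot_iff.mp hle
      exact absurd this.symm bot_ne_top
  · rintro ⟨hFD, hfin⟩
    haveI := hFD
    classical
    set T := hfin.toFinset with hT
    set D := ∑ j ∈ T, finrank k (M.obj (obj j)) with hD
    refine ⟨D + 2, fun s hs => ?_⟩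
    set dfun : Subobject M → ℕ :=
      fun P => ∑ j ∈ T, finrank k ((Subobject.underlying.obj P).obj (obj j)) with hdfun
    have hdle : ∀ P : Subobject M, dfun P ≤ D := by
      intro P
      refine Finset.sum_le_sum fun j _ => ?_
      haveI := hFD j
      exact LinearMap.finrank_le_finrank_of_injective (subobj_arrow_inj P (obj j))
    have hdmono : ∀ P Q : Subobject M, P < Q → dfun P < dfun Q := by
      intro P Q hPQ
      have hle : P ≤ Q := le_of_lt hPQ
      have hterm : ∀ j ∈ T, finrank k ((Subobject.underlying.obj P).obj (obj j)) ≤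
          finrank k ((Subobject.underlying.obj Q).obj (obj j)) := by
        intro j _
        haveI := hFD j
        haveI := subobj_fd Q (obj j)
        exact LinearMap.finrank_le_finrank_of_injective (subobj_ofLE_inj hle (obj j))
      have hsum : dfun P ≤ dfun Q := Finset.sum_le_sum hterm
      rcases lt_or_eq_of_le hsum with h | h
      · exact h
      · exfalso
        have heq : ∀ j ∈ T, finrank k ((Subobject.underlying.obj P).obj (obj j)) =
            finrank k ((Subobject.underlying.obj Q).obj (obj j)) :=
          (Finset.sum_eq_sum_iff_of_le hterm).mp h
        have hiso : ∀ y : C, IsIso ((Subobject.ofLE P Q hle).app y) := by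
          intro y
          obtain ⟨n', ⟨e⟩⟩ := hsurj y
          refine subobj_isoapp_conj hle e ?_
          by_cases hn' : n' ∈ T
          · haveI := hFD n'
            haveI := subobj_fd P (obj n')
            haveI := subobj_fd Q (obj n')
            have hinj := subobj_ofLE_inj hle (obj n')
            have hsurj' := LinearMap.injective_iff_surjective_of_finrank_eq_finrank
              (heq n' hn') |>.mp hinj
            exact modcat_isIso_of_bijective _ ⟨hinj, hsurj'⟩
          · have hz : IsZero (M.obj (obj n')) := by
              by_contra hnz
              exact hn' (hfin.mem_toFinset.mpr hnz)
            haveI := modcat_subsingleton_of_isZero hz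
            haveI : Subsingleton ((Subobject.underlying.obj Q).obj (obj n')) :=
              ⟨fun a b => subobj_arrow_inj Q (obj n') (Subsingleton.elim _ _)⟩
            refine modcat_isIso_of_bijective _ ⟨subobj_ofLE_inj hle (obj n'), fun b => ?_⟩
            exact ⟨0, Subsingleton.elim _ _⟩
        exact (ne_of_lt hPQ) (subobj_eq_of_isoapp hle hiso)
    have hsmono : StrictMono (fun i : Fin (D + 2) => dfun (s i)) :=
      fun i j hij => hdmono _ _ (hs hij)
    have h1 := fin_le_of_strictMono _ hsmono ⟨D + 1, by omega⟩
    have h2 := hdle (s ⟨D + 1, by omega⟩)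
    simp only [Fin.val_mk] at h1
    omega

end Aux

section Parts23
variable {k : Type w} [Field k] {C : Type u} [Category.{v} C] [Preadditive C]
  [CategoryTheory.Linear k C]

instance prinInj_additive (x : C) : (prinInj k x).Additive where
  map_add := by
    intro y z f g
    refine ModuleCat.hom_ext (LinearMap.ext fun (φ : Module.Dual k (y ⟶ x)) => LinearMap.ext fun h => ?_)
    show φ ((f + g) ≫ h) = φ (f ≫ h) + φ (g ≫ h)
    rw [Preadditive.add_comp]
    exact map_add φ _ _

instance prinInj_linear (x : C) : Functor.Linear k (prinInj k x) where
  map_smul := by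
    intro y z f r
    refine ModuleCat.hom_ext (LinearMap.ext fun (φ : Module.Dual k (y ⟶ x)) => LinearMap.ext fun h => ?_)
    show φ ((r • f) ≫ h) = r • φ (f ≫ h)
    rw [CategoryTheory.Linear.smul_comp]
    exact map_smul φ r _

/-- The canonical evaluation morphism `M ⟶ 𝐈_x` attached to `φ : M_x^*`. -/
noncomputable def evalComp (M : C ⥤ ModuleCat.{max v w} k) [M.Additive]
    [Functor.Linear k M] (x : C) (φ : Module.Dual k (M.obj x)) : M ⟶ prinInj k x where
  app y := ModuleCat.ofHom
    { toFun := fun v =>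
        { toFun := fun f => φ (M.map f v)
          map_add' := by
            intro f g
            show φ (M.map (f + g) v) = φ (M.map f v) + φ (M.map g v)
            rw [M.map_add]
            erw [LinearMap.add_apply]
            rw [map_add]
          map_smul' := by
            intro r f
            show φ (M.map (r • f) v) = r • φ (M.map f v)
            rw [M.map_smul]
            erw [LinearMap.smul_apply]
            rw [map_smul] }
      map_add' := by
        intro v w
        refine LinearMap.ext fun f => ?_
        simp
      map_smul' := by
        intro r v
        refine LinearMap.ext fun f => ?_
        simp }
  naturality := by
    intro y z g
    refine ModuleCat.hom_ext (LinearMap.ext fun v => LinearMap.ext fun f => ?_)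
    have : M.map g ≫ M.map f = M.map (g ≫ f) := (M.map_comp g f).symm
    show φ (M.map f (M.map g v)) = φ (M.map (g ≫ f) v)
    rw [← this]
    rfl

lemma part2 (obj : ℕ → C)
    (hsurj : ∀ X : C, ∃ n : ℕ, Nonempty (X ≅ obj n))
    (hup : ∀ (n m : ℕ) (f : obj n ⟶ obj m), f ≠ 0 → n ≤ m)
    (hfd : ∀ x y : C, FiniteDimensional k (x ⟶ y))
    (n : ℕ) : FinLenObj (prinInj k (obj n)) := by
  refine (part1 obj hsurj hup hfd (prinInj k (obj n))).mpr ⟨?_, ?_⟩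
  · intro m
    haveI := hfd (obj m) (obj n)
    exact inferInstanceAs (FiniteDimensional k (Module.Dual k (obj m ⟶ obj n)))
  · refine Set.Finite.subset (Set.finite_Iic n) fun m hm => ?_
    simp only [Set.mem_setOf_eq] at hm
    by_contra hmn
    simp only [Set.mem_Iic, not_le] at hmn
    apply hm
    haveI : Subsingleton (obj m ⟶ obj n) := ⟨fun a b => by
      have ha : a = 0 := by by_contra h; exact absurd (hup m n a h) (by omega)
      have hb : b = 0 := by by_contra h; exact absurd (hup m n b h) (by omega)
      rw [ha, hb]⟩
    haveI hsub : Subsingleton (Module.Dual k (obj m ⟶ obj n)) :=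
      ⟨fun a b => LinearMap.ext fun f => by rw [Subsingleton.elim f 0]; simp⟩
    exact @ModuleCat.isZero_of_subsingleton k _ _ hsub

lemma part3 (obj : ℕ → C)
    (hsurj : ∀ X : C, ∃ n : ℕ, Nonempty (X ≅ obj n))
    (hup : ∀ (n m : ℕ) (f : obj n ⟶ obj m), f ≠ 0 → n ≤ m)
    (hfd : ∀ x y : C, FiniteDimensional k (x ⟶ y))
    (M : C ⥤ ModuleCat.{max v w} k) [M.Additive] [Functor.Linear k M]
    (hM : FinLenObj M) :
    ∃ (N : ℕ) (m : Fin N → ℕ)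
      (f : M ⟶ ∐ (fun i : Fin N => prinInj k (obj (m i)))), Mono f := by
  classical
  obtain ⟨hFD, hfin⟩ := (part1 obj hsurj hup hfd M).mp hM
  haveI := hFD
  set T := hfin.toFinset with hT
  let I := Σ j : {x // x ∈ T}, Fin (finrank k (M.obj (obj j.1)))
  let φ : ∀ p : I, Module.Dual k (M.obj (obj p.1.1)) :=
    fun p => (Module.finBasis k (M.obj (obj p.1.1))).coord p.2
  let N := Fintype.card I
  let e : I ≃ Fin N := Fintype.equivFin I
  let m : Fin N → ℕ := fun i => (e.symm i).1.1
  let comps : ∀ i : Fin N, M ⟶ prinInj k (obj (m i)) :=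
    fun i => evalComp M (obj (m i)) (φ (e.symm i))
  have sep : ∀ (y : C) (v : M.obj y), (∀ i, (comps i).app y v = 0) → v = 0 := by
    intro y v hv
    obtain ⟨n', ⟨e'⟩⟩ := hsurj y
    have hround : M.map e'.inv (M.map e'.hom v) = v := by
      have h : M.map e'.hom ≫ M.map e'.inv = 𝟙 (M.obj y) := by
        rw [← M.map_comp, e'.hom_inv_id, M.map_id]
      exact congrArg (fun (L : M.obj y ⟶ M.obj y) => L v) h
    by_cases hn' : n' ∈ T
    · have hco : ∀ idx, (Module.finBasis k (M.obj (obj n'))).coord idx (M.map e'.hom v) = 0 := by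
        intro idx
        have h0 : ((evalComp M (obj ((e.symm (e ⟨⟨n', hn'⟩, idx⟩)).1.1))
            (φ (e.symm (e ⟨⟨n', hn'⟩, idx⟩)))).app y) v = 0 := hv (e ⟨⟨n', hn'⟩, idx⟩)
        rw [e.symm_apply_apply] at h0
        have h1 := congrArg
          (fun (ψ : (prinInj k (obj n')).obj y) =>
            (show Module.Dual k (y ⟶ obj n') from ψ) e'.hom) h0
        exact h1
      have h1 : M.map e'.hom v = 0 :=
        ((Module.finBasis k (M.obj (obj n'))).forall_coord_eq_zero_iff).mp hco
      rw [h1] at hround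
      rw [← hround]
      simp
    · have hz : IsZero (M.obj (obj n')) := by
        by_contra hnz
        exact hn' (hfin.mem_toFinset.mpr hnz)
      haveI := modcat_subsingleton_of_isZero hz
      have h1 : M.map e'.hom v = 0 := Subsingleton.elim _ _
      rw [h1] at hround
      rw [← hround]
      simp
  haveI : HasBiproduct (fun i : Fin N => prinInj k (obj (m i))) :=
    HasBiproduct.of_hasCoproduct _
  let fmor : M ⟶ ∐ (fun i : Fin N => prinInj k (obj (m i))) :=
    biproduct.lift comps ≫ (biproduct.isoCoproduct _).hom
  refine ⟨N, m, fmor, Preadditive.mono_of_cancel_zero _ ?_⟩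
  intro Z g hg
  have hfi : ∀ i, fmor ≫ ((biproduct.isoCoproduct _).inv ≫ biproduct.π _ i) = comps i := by
    intro i
    calc fmor ≫ ((biproduct.isoCoproduct _).inv ≫ biproduct.π _ i)
        = biproduct.lift comps ≫ ((biproduct.isoCoproduct fun b => prinInj k (obj (m b))).hom ≫
            (biproduct.isoCoproduct _).inv) ≫ biproduct.π _ i := by
          simp only [fmor, Category.assoc]
      _ = biproduct.lift comps ≫ biproduct.π _ i := by rw [Iso.hom_inv_id, Category.id_comp]
      _ = comps i := biproduct.lift_π _ _
  have hgc : ∀ i, g ≫ comps i = 0 := by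
    intro i
    rw [← hfi i, ← Category.assoc, hg, zero_comp]
  refine NatTrans.ext (funext fun y => ?_)
  refine ModuleCat.hom_ext (LinearMap.ext fun wv => ?_)
  have hz : ∀ i, (comps i).app y (g.app y wv) = 0 := by
    intro i
    have := congrArg (fun (α : Z ⟶ prinInj k (obj (m i))) => α.app y wv) (hgc i)
    simpa using this
  exact sep y (g.app y wv) hz

end Parts23


/-- For an upwards `k`-linear category with objects indexed by `ℕ` and
finite-dimensional Hom spaces: a module has finite length iff all its values are
finite-dimensional and all but finitely many vanish; each principal injective has finite
length; and every finite-length module embeds into a finite direct sum of principal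
injectives. -/
theorem stmt_17 {k : Type w} [Field k] {C : Type u} [Category.{v} C] [Preadditive C]
    [CategoryTheory.Linear k C]
    (obj : ℕ → C)
    (hsurj : ∀ X : C, ∃ n : ℕ, Nonempty (X ≅ obj n))
    (hdist : ∀ n m : ℕ, Nonempty (obj n ≅ obj m) → n = m)
    (hup : ∀ (n m : ℕ) (f : obj n ⟶ obj m), f ≠ 0 → n ≤ m)
    (hfd : ∀ x y : C, FiniteDimensional k (x ⟶ y)) :
    (∀ (M : C ⥤ ModuleCat.{max v w} k) [M.Additive] [Functor.Linear k M],
      (FinLenObj M ↔ ((∀ n : ℕ, FiniteDimensional k (M.obj (obj n))) ∧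
        {n : ℕ | ¬ IsZero (M.obj (obj n))}.Finite))) ∧
    (∀ n : ℕ, FinLenObj (prinInj k (obj n))) ∧
    (∀ (M : C ⥤ ModuleCat.{max v w} k) [M.Additive] [Functor.Linear k M], FinLenObj M →
      ∃ (N : ℕ) (m : Fin N → ℕ)
        (f : M ⟶ ∐ (fun i : Fin N => prinInj k (obj (m i)))), Mono f) := by
  exact ⟨fun M _ _ => part1 obj hsurj hup hfd M,
    fun n => part2 obj hsurj hup hfd n,
    fun M _ _ hM => part3 obj hsurj hup hfd M hM⟩
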